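/- For all integers a ≥ 1, n ≥ 1 and 0 ≤ i ≤ n−1, the partial alternating sum ∑_{j=0}^{i} (−1)^{i−j} · C(n,j) · C(an+1+j, (a−1)n+1+j)/(an+1+j) equals (1/(an+1)) · C(n−1, i) · C(an+1+i, (a−1)n+1+i). -/

import Mathlib

open Finset

/-- For integers `a ≥ 1`, `n ≥ 1` and `0 ≤ i ≤ n−1`, the partial alternating sum
`∑_{j=0}^{i} (−1)^{i−j} · C(n,j) · C(an+1+j, (a−1)n+1+j)/(an+1+j)` equals
`(1/(an+1)) · C(n−1, i) · C(an+1+i, (a−1)n+1+i)`. -/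
theorem stmt_8 (a n i : ℕ) (ha : 1 ≤ a) (hn : 1 ≤ n) (hi : i ≤ n - 1) :
    ∑ j ∈ Finset.range (i + 1),
      (-1 : ℚ) ^ (i - j) * (n.choose j : ℚ) *
        ((a * n + 1 + j).choose ((a - 1) * n + 1 + j) : ℚ) / (a * n + 1 + j)
      = 1 / ((a : ℚ) * n + 1) * ((n - 1).choose i : ℚ) *
          ((a * n + 1 + i).choose ((a - 1) * n + 1 + i) : ℚ) := by
  induction i with
  | zero =>
      simp [Finset.sum_range_one]
      ring
  | succ i ih =>
      have hi' : i ≤ n - 1 := le_trans (Nat.le_succ i) hi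
      have ih' := ih hi'
      rw [Finset.sum_range_succ]
      have hneg : ∑ j ∈ Finset.range (i + 1),
          (-1 : ℚ) ^ (i + 1 - j) * (n.choose j : ℚ) *
            ((a * n + 1 + j).choose ((a - 1) * n + 1 + j) : ℚ) / (a * n + 1 + j)
          = -∑ j ∈ Finset.range (i + 1),
          (-1 : ℚ) ^ (i - j) * (n.choose j : ℚ) *
            ((a * n + 1 + j).choose ((a - 1) * n + 1 + j) : ℚ) / (a * n + 1 + j) := by
        rw [← Finset.sum_neg_distrib]
        refine Finset.sum_congr rfl fun j hj => ?_
        have hj' : j ≤ i := Nat.lt_succ_iff.mp (Finset.mem_range.mp hj)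
        rw [Nat.succ_sub hj', pow_succ]
        ring
      rw [hneg, ih']
      -- now the algebraic identity
      have hD : ((a:ℚ) * n + 1) ≠ 0 := by positivity
      have hE : ((a:ℚ) * n + 1 + (i+1:ℕ)) ≠ 0 := by positivity
      -- nat facts
      have h1 : ((a*n+1+i)+1) * (a*n+1+i).choose ((a-1)*n+1+i)
          = (a*n+1+(i+1)).choose ((a-1)*n+1+(i+1)) * ((a-1)*n+1+i+1) := by
        have := Nat.add_one_mul_choose_eq (a*n+1+i) ((a-1)*n+1+i)
        simpa [Nat.succ_eq_add_one, Nat.add_assoc] using this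
      have h2 : n.choose (i+1) = (n-1).choose i + (n-1).choose (i+1) := by
        conv_lhs => rw [← Nat.succ_pred_eq_of_pos hn]
        rw [Nat.choose_succ_succ]
        rfl
      have h3 : (n-1).choose (i+1) * (i+1) = (n-1).choose i * ((n-1) - i) := by
        exact Nat.choose_succ_right_eq (n-1) i
      have hin : i + 1 ≤ n - 1 := hi
      have hcast : ((n - 1 - i : ℕ) : ℚ) = (n : ℚ) - 1 - i := by
        have : i ≤ n - 1 := hi'
        push_cast [Nat.cast_sub this, Nat.cast_sub hn]
        ring
      have hacast : (((a-1)*n : ℕ) : ℚ) = ((a:ℚ) - 1) * n := by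
        push_cast [Nat.cast_sub ha]
        ring
      have q1 : (((a*n+1+(i+1)).choose ((a-1)*n+1+(i+1)) : ℕ) : ℚ) * (((a:ℚ)-1)*n+1+i+1)
          = ((a:ℚ)*n+1+i+1) * ((a*n+1+i).choose ((a-1)*n+1+i) : ℚ) := by
        have := congrArg (fun x : ℕ => (x : ℚ)) h1
        push_cast [Nat.cast_sub ha] at this ⊢
        linarith [this]
      have q2 : ((n.choose (i+1) : ℕ) : ℚ) = ((n-1).choose i : ℚ) + ((n-1).choose (i+1) : ℚ) := by
        exact_mod_cast congrArg (fun x : ℕ => (x : ℚ)) h2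
      have q3 : ((n-1).choose (i+1) : ℚ) * (i+1) = ((n-1).choose i : ℚ) * ((n:ℚ) - 1 - i) := by
        have := congrArg (fun x : ℕ => (x : ℚ)) h3
        push_cast [Nat.cast_sub hi', Nat.cast_sub hn] at this
        linarith [this]
      set A := ((n-1).choose i : ℚ)
      set B := ((n-1).choose (i+1) : ℚ)
      set C := (n.choose (i+1) : ℚ)
      set K0 := ((a*n+1+i).choose ((a-1)*n+1+i) : ℚ)
      set K1 := ((a*n+1+(i+1)).choose ((a-1)*n+1+(i+1)) : ℚ)
      simp only [Nat.sub_self, pow_zero]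
      push_cast
      field_simp
      linear_combination A * q1 + (((a:ℚ)*n+1)*K1) * q2 + (-K1) * q3
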